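/- Let X₁, X₂, Y_r, Ŷ, Y₁, Y₂ be random variables taking finitely many values on a common probability space with I(Ŷ; ⟨X₁, Y₁⟩ | ⟨Y_r, X₂⟩) = 0. Define I₁ = I(Ŷ; Y_r | X₂), I₂⁽ᵗ⁾ = I(⟨X₁,X₂⟩; Y_t) + I(Ŷ; ⟨X₁,Y_t⟩ | X₂) for t = 1, 2, R₁⁽ᵗ⁾(R₂) = max{ min{ I(X₁; ⟨Ŷ,Y_t⟩ | X₂), I₂⁽ᵗ⁾ − R₂ }, I(X₁; Y_t) }, and R₂* = max{ I₁, I(X₂; Y₂ | X₁) + I(Ŷ; ⟨X₁,Y₂⟩ | X₂) }. Then R₁⁽¹⁾(R₂*) − R₁⁽²⁾(R₂*) ≥ min{ I(X₁; ⟨Ŷ,Y₁⟩ | X₂) − I(X₁; Y₂), I₂⁽¹⁾ − I₂⁽²⁾, I(⟨X₁,X₂⟩; Y₁) − I(Ŷ; Y_r | ⟨X₁,X₂,Y₁⟩) − I(X₁; Y₂) }. -/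
import Mathlib


open MeasureTheory

section InformationTheory

variable {Ω : Type*} [MeasurableSpace Ω]

/-- Probability that a finite-valued random variable `X` takes the value `a`. -/
noncomputable def probOf (μ : Measure Ω) {A : Type*} (X : Ω → A) (a : A) : ℝ :=
  (μ (X ⁻¹' {a})).toReal

/-- Shannon entropy (in bits) of a finite-valued random variable `X`
(with the convention `0·log₂ 0 = 0`, automatic since `Real.logb 2 0 = 0`). -/
noncomputable def entropy (μ : Measure Ω) {A : Type*} [Fintype A] (X : Ω → A) : ℝ :=
  -∑ a : A, probOf μ X a * Real.logb 2 (probOf μ X a)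

/-- Conditional Shannon entropy `H(X | Y) = H(X, Y) − H(Y)`. -/
noncomputable def condEntropy (μ : Measure Ω) {A B : Type*} [Fintype A] [Fintype B]
    (X : Ω → A) (Y : Ω → B) : ℝ :=
  entropy μ (fun ω => (X ω, Y ω)) - entropy μ Y

/-- Mutual information `I(X; Y) = H(X) + H(Y) − H(X, Y)`. -/
noncomputable def mutualInfo (μ : Measure Ω) {A B : Type*} [Fintype A] [Fintype B]
    (X : Ω → A) (Y : Ω → B) : ℝ :=
  entropy μ X + entropy μ Y - entropy μ (fun ω => (X ω, Y ω))

/-- Conditional mutual information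
`I(X; Y | Z) = H(X, Z) + H(Y, Z) − H(X, Y, Z) − H(Z)`. -/
noncomputable def condMutualInfo (μ : Measure Ω) {A B C : Type*}
    [Fintype A] [Fintype B] [Fintype C] (X : Ω → A) (Y : Ω → B) (Z : Ω → C) : ℝ :=
  entropy μ (fun ω => (X ω, Z ω)) + entropy μ (fun ω => (Y ω, Z ω))
    - entropy μ (fun ω => ((X ω, Y ω), Z ω)) - entropy μ Z

end InformationTheory

section Aux

variable {Ω : Type*} [MeasurableSpace Ω]

lemma entropy_comp_inj (μ : Measure Ω) {A B : Type*} [Fintype A] [Fintype B]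
    (X : Ω → A) (f : A → B) (hf : Function.Injective f) :
    entropy μ (fun ω => f (X ω)) = entropy μ X := by
  classical
  unfold entropy
  congr 1
  have hpre : ∀ a : A, probOf μ (fun ω => f (X ω)) (f a) = probOf μ X a := by
    intro a
    unfold probOf
    congr 2
    ext ω
    simp [hf.eq_iff]
  have h0 : ∀ b ∈ (Finset.univ : Finset B), b ∉ Finset.univ.image f →
      probOf μ (fun ω => f (X ω)) b * Real.logb 2 (probOf μ (fun ω => f (X ω)) b) = 0 := by
    intro b _ hb
    have hempty : (fun ω => f (X ω)) ⁻¹' {b} = ∅ := by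
      ext ω
      simp only [Set.mem_preimage, Set.mem_singleton_iff, Set.mem_empty_iff_false, iff_false]
      intro h
      exact hb (Finset.mem_image.mpr ⟨X ω, Finset.mem_univ _, h⟩)
    have : probOf μ (fun ω => f (X ω)) b = 0 := by
      simp [probOf, hempty]
    rw [this, zero_mul]
  calc ∑ b : B, probOf μ (fun ω => f (X ω)) b * Real.logb 2 (probOf μ (fun ω => f (X ω)) b)
      = ∑ b ∈ Finset.univ.image f,
          probOf μ (fun ω => f (X ω)) b * Real.logb 2 (probOf μ (fun ω => f (X ω)) b) :=
        (Finset.sum_subset (Finset.subset_univ _) h0).symm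
    _ = ∑ a : A, probOf μ (fun ω => f (X ω)) (f a)
          * Real.logb 2 (probOf μ (fun ω => f (X ω)) (f a)) :=
        Finset.sum_image (fun x _ y _ h => hf h)
    _ = ∑ a : A, probOf μ X a * Real.logb 2 (probOf μ X a) := by
        exact Finset.sum_congr rfl (fun a _ => by rw [hpre])

lemma entropy_congr (μ : Measure Ω) {A B C : Type*} [Fintype A] [Fintype B] [Fintype C]
    (T : Ω → C) (f : C → A) (g : C → B)
    (hf : Function.Injective f) (hg : Function.Injective g) :
    entropy μ (fun ω => f (T ω)) = entropy μ (fun ω => g (T ω)) := by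
  rw [entropy_comp_inj μ T f hf, entropy_comp_inj μ T g hg]

lemma ident1 (μ : Measure Ω) {A B C : Type*} [Fintype A] [Fintype B] [Fintype C]
    (U : Ω → A) (V : Ω → B) (W : Ω → C) :
    mutualInfo μ (fun ω => (U ω, V ω)) W
      = mutualInfo μ U W + condMutualInfo μ V W U := by
  have h1 : entropy μ (fun ω => (V ω, U ω)) = entropy μ (fun ω => (U ω, V ω)) :=
    entropy_congr μ (fun ω => (U ω, V ω)) (fun p => (p.2, p.1)) id
      (by intro p q h; simp [Prod.ext_iff] at h ⊢; tauto) Function.injective_id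
  have h2 : entropy μ (fun ω => (W ω, U ω)) = entropy μ (fun ω => (U ω, W ω)) :=
    entropy_congr μ (fun ω => (U ω, W ω)) (fun p => (p.2, p.1)) id
      (by intro p q h; simp [Prod.ext_iff] at h ⊢; tauto) Function.injective_id
  have h3 : entropy μ (fun ω => ((V ω, W ω), U ω))
      = entropy μ (fun ω => ((U ω, V ω), W ω)) :=
    entropy_congr μ (fun ω => (U ω, (V ω, W ω)))
      (fun p => ((p.2.1, p.2.2), p.1)) (fun p => ((p.1, p.2.1), p.2.2))
      (by intro p q h; simp [Prod.ext_iff] at h ⊢; tauto)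
      (by intro p q h; simp [Prod.ext_iff] at h ⊢; tauto)
  simp only [mutualInfo, condMutualInfo]
  linarith

lemma ident2 (μ : Measure Ω) {A B C D E : Type*}
    [Fintype A] [Fintype B] [Fintype C] [Fintype D] [Fintype E]
    (U : Ω → A) (V : Ω → B) (W : Ω → C) (P : Ω → D) (Q : Ω → E) :
    condMutualInfo μ U (fun ω => (P ω, Q ω)) W
      + condMutualInfo μ U V (fun ω => (P ω, W ω, Q ω))
    = condMutualInfo μ U V W
      + condMutualInfo μ U (fun ω => (P ω, Q ω)) (fun ω => (V ω, W ω)) := by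
  have e1 : entropy μ (fun ω => ((P ω, Q ω), W ω))
      = entropy μ (fun ω => (P ω, W ω, Q ω)) :=
    entropy_congr μ (fun ω => (P ω, (W ω, Q ω)))
      (fun p => ((p.1, p.2.2), p.2.1)) id
      (by intro p q h; simp [Prod.ext_iff] at h ⊢; tauto) Function.injective_id
  have e2 : entropy μ (fun ω => ((U ω, (P ω, Q ω)), W ω))
      = entropy μ (fun ω => (U ω, (P ω, W ω, Q ω))) :=
    entropy_congr μ (fun ω => (U ω, (P ω, (W ω, Q ω))))
      (fun p => ((p.1, (p.2.1, p.2.2.2)), p.2.2.1)) id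
      (by intro p q h; simp [Prod.ext_iff] at h ⊢; tauto) Function.injective_id
  have e3 : entropy μ (fun ω => ((P ω, Q ω), (V ω, W ω)))
      = entropy μ (fun ω => (V ω, (P ω, W ω, Q ω))) :=
    entropy_congr μ (fun ω => (V ω, (P ω, (W ω, Q ω))))
      (fun p => ((p.2.1, p.2.2.2), (p.1, p.2.2.1))) id
      (by intro p q h; simp [Prod.ext_iff] at h ⊢; tauto) Function.injective_id
  have e4 : entropy μ (fun ω => ((U ω, (P ω, Q ω)), (V ω, W ω)))
      = entropy μ (fun ω => ((U ω, V ω), (P ω, W ω, Q ω))) :=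
    entropy_congr μ (fun ω => ((U ω, V ω), (P ω, (W ω, Q ω))))
      (fun p => ((p.1.1, (p.2.1, p.2.2.2)), (p.1.2, p.2.2.1))) id
      (by intro p q h; simp [Prod.ext_iff] at h ⊢; tauto) Function.injective_id
  have e5 : entropy μ (fun ω => ((U ω, V ω), W ω))
      = entropy μ (fun ω => (U ω, (V ω, W ω))) :=
    entropy_congr μ (fun ω => ((U ω, V ω), W ω))
      id (fun p => (p.1.1, (p.1.2, p.2)))
      Function.injective_id (by intro p q h; simp [Prod.ext_iff] at h ⊢; tauto)
  simp only [condMutualInfo]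
  linarith

lemma arith_aux (A1 A2 i1 c mY1 mY2 J1 J2 K : ℝ)
    (h1 : J2 = mY2 + c) (h2 : J1 - i1 = K) :
    max (min A1 (J1 - max i1 c)) mY1 - max (min A2 (J2 - max i1 c)) mY2
      ≥ min (A1 - mY2) (min (J1 - J2) (K - mY2)) := by
  have hc : c ≤ max i1 c := le_max_right _ _
  have hR12 : max (min A2 (J2 - max i1 c)) mY2 = mY2 :=
    max_eq_right (le_trans (min_le_right _ _) (by linarith))
  rw [hR12]
  have hmax : min A1 (J1 - max i1 c) ≤ max (min A1 (J1 - max i1 c)) mY1 := le_max_left _ _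
  have l1 : min (A1 - mY2) (min (J1 - J2) (K - mY2)) ≤ A1 - mY2 := min_le_left _ _
  have l2 : min (A1 - mY2) (min (J1 - J2) (K - mY2)) ≤ J1 - J2 :=
    le_trans (min_le_right _ _) (min_le_left _ _)
  have l3 : min (A1 - mY2) (min (J1 - J2) (K - mY2)) ≤ K - mY2 :=
    le_trans (min_le_right _ _) (min_le_right _ _)
  have key : min (A1 - mY2) (min (J1 - J2) (K - mY2)) ≤ min A1 (J1 - max i1 c) - mY2 := by
    rcases max_cases i1 c with ⟨hm, _⟩ | ⟨hm, _⟩ <;>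
      (rw [hm, le_sub_iff_add_le, le_min_iff]; exact ⟨by linarith, by linarith⟩)
  linarith

end Aux

/-- The lower bound (equation (6)) of the paper on the secrecy rate achievable
in the very strong eavesdropping case: with the choice
`R₂ = R₂* = max{I₁, I(X₂;Y₂|X₁) + I(Ŷ;X₁,Y₂|X₂)}`, the difference
`R₁⁽¹⁾(R₂*) − R₁⁽²⁾(R₂*)` is bounded below by the minimum of three terms. -/
theorem stmt_14 {Ω : Type*} [MeasurableSpace Ω] (μ : MeasureTheory.Measure Ω)
    [MeasureTheory.IsProbabilityMeasure μ]
    {𝒳₁ 𝒳₂ 𝒴r 𝒴h 𝒴₁ 𝒴₂ : Type*}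
    [Fintype 𝒳₁] [Fintype 𝒳₂] [Fintype 𝒴r] [Fintype 𝒴h] [Fintype 𝒴₁] [Fintype 𝒴₂]
    (X₁ : Ω → 𝒳₁) (X₂ : Ω → 𝒳₂) (Yr : Ω → 𝒴r) (Yh : Ω → 𝒴h)
    (Y₁ : Ω → 𝒴₁) (Y₂ : Ω → 𝒴₂)
    (hMarkov : condMutualInfo μ Yh (fun ω => (X₁ ω, Y₁ ω)) (fun ω => (Yr ω, X₂ ω)) = 0) :
    let I₁ : ℝ := condMutualInfo μ Yh Yr X₂
    let I₂₁ : ℝ := mutualInfo μ (fun ω => (X₁ ω, X₂ ω)) Y₁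
      + condMutualInfo μ Yh (fun ω => (X₁ ω, Y₁ ω)) X₂
    let I₂₂ : ℝ := mutualInfo μ (fun ω => (X₁ ω, X₂ ω)) Y₂
      + condMutualInfo μ Yh (fun ω => (X₁ ω, Y₂ ω)) X₂
    let R₂s : ℝ := max I₁
      (condMutualInfo μ X₂ Y₂ X₁ + condMutualInfo μ Yh (fun ω => (X₁ ω, Y₂ ω)) X₂)
    let R₁₁ : ℝ := max (min (condMutualInfo μ X₁ (fun ω => (Yh ω, Y₁ ω)) X₂)
      (I₂₁ - R₂s)) (mutualInfo μ X₁ Y₁)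
    let R₁₂ : ℝ := max (min (condMutualInfo μ X₁ (fun ω => (Yh ω, Y₂ ω)) X₂)
      (I₂₂ - R₂s)) (mutualInfo μ X₁ Y₂)
    R₁₁ - R₁₂ ≥
      min (condMutualInfo μ X₁ (fun ω => (Yh ω, Y₁ ω)) X₂ - mutualInfo μ X₁ Y₂)
        (min (I₂₁ - I₂₂)
          (mutualInfo μ (fun ω => (X₁ ω, X₂ ω)) Y₁
            - condMutualInfo μ Yh Yr (fun ω => (X₁ ω, X₂ ω, Y₁ ω))
            - mutualInfo μ X₁ Y₂)) := by
  intro I₁ I₂₁ I₂₂ R₂s R₁₁ R₁₂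
  have h1 : I₂₂ = mutualInfo μ X₁ Y₂ +
      (condMutualInfo μ X₂ Y₂ X₁ + condMutualInfo μ Yh (fun ω => (X₁ ω, Y₂ ω)) X₂) := by
    have hi := ident1 μ X₁ X₂ Y₂
    show mutualInfo μ (fun ω => (X₁ ω, X₂ ω)) Y₂
      + condMutualInfo μ Yh (fun ω => (X₁ ω, Y₂ ω)) X₂ = _
    linarith
  have h2 : I₂₁ - I₁ = mutualInfo μ (fun ω => (X₁ ω, X₂ ω)) Y₁
      - condMutualInfo μ Yh Yr (fun ω => (X₁ ω, X₂ ω, Y₁ ω)) := by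
    have hi := ident2 μ Yh Yr X₂ X₁ Y₁
    show (mutualInfo μ (fun ω => (X₁ ω, X₂ ω)) Y₁
      + condMutualInfo μ Yh (fun ω => (X₁ ω, Y₁ ω)) X₂) - condMutualInfo μ Yh Yr X₂ = _
    linarith [hMarkov]
  exact arith_aux (condMutualInfo μ X₁ (fun ω => (Yh ω, Y₁ ω)) X₂)
    (condMutualInfo μ X₁ (fun ω => (Yh ω, Y₂ ω)) X₂) I₁
    (condMutualInfo μ X₂ Y₂ X₁ + condMutualInfo μ Yh (fun ω => (X₁ ω, Y₂ ω)) X₂)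
    (mutualInfo μ X₁ Y₁) (mutualInfo μ X₁ Y₂) I₂₁ I₂₂ _ h1 h2
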